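/- Let n ≥ 1 and let A be an n×n real matrix whose columns all sum to zero (∑_i A i j = 0 for all j). Suppose the kernel of the linear map v ↦ A·v is one-dimensional and is spanned by a vector ρ with ∑_i ρ i ≠ 0. Then for every vector b with ∑_i b i = 0, there exists a unique vector Z such that A·Z = b and ∑_i Z i = 0. -/

import Mathlib

/-- Fredholm-alternative solvability for a singular Markov generator: if the columns
of `A` sum to zero and the kernel of `v ↦ A v` is one-dimensional, spanned by a
vector `ρ` whose entries do not sum to zero, then for every `b` with `∑ b = 0` there
is a unique `Z` with `A Z = b` and `∑ Z = 0`. -/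
theorem fredholm_alternative_markov_generator
    (n : ℕ) (hn : 1 ≤ n) (A : Matrix (Fin n) (Fin n) ℝ)
    (hcol : ∀ j, ∑ i, A i j = 0)
    (ρ : Fin n → ℝ) (hρsum : ∑ i, ρ i ≠ 0)
    (hker : ∀ v : Fin n → ℝ, A.mulVec v = 0 ↔ ∃ c : ℝ, v = c • ρ) :
    ∀ b : Fin n → ℝ, ∑ i, b i = 0 →
      ∃! Z : Fin n → ℝ, A.mulVec Z = b ∧ ∑ i, Z i = 0 := by
  intro b hb
  have hρ0 : ρ ≠ 0 := by
    intro h; apply hρsum; simp [h]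
  have hAρ : A.mulVec ρ = 0 := (hker ρ).mpr ⟨1, by simp⟩
  set f := A.mulVecLin with hf
  set g : (Fin n → ℝ) →ₗ[ℝ] ℝ := ∑ i, LinearMap.proj i with hg
  have hgapp : ∀ v : Fin n → ℝ, g v = ∑ i, v i := by
    intro v; simp [hg, LinearMap.proj_apply]
  -- kernel of f is span of ρ
  have hkerf : LinearMap.ker f = Submodule.span ℝ {ρ} := by
    ext v
    rw [LinearMap.mem_ker, Submodule.mem_span_singleton]
    change A.mulVec v = 0 ↔ _
    rw [hker]
    exact exists_congr fun c => eq_comm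
  have hkerf1 : Module.finrank ℝ (LinearMap.ker f) = 1 := by
    rw [hkerf]; exact finrank_span_singleton hρ0
  -- g is surjective
  have hgsurj : Function.Surjective g := by
    intro r
    refine ⟨(r / ∑ i, ρ i) • ρ, ?_⟩
    rw [map_smul, hgapp]
    rw [smul_eq_mul, div_mul_cancel₀ _ hρsum]
  have hrn : Module.finrank ℝ (LinearMap.range f) + Module.finrank ℝ (LinearMap.ker f)
      = Module.finrank ℝ (Fin n → ℝ) := LinearMap.finrank_range_add_finrank_ker f
  have hrng : Module.finrank ℝ (LinearMap.range g) + Module.finrank ℝ (LinearMap.ker g)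
      = Module.finrank ℝ (Fin n → ℝ) := LinearMap.finrank_range_add_finrank_ker g
  have hdim : Module.finrank ℝ (Fin n → ℝ) = n := by simp
  have hrangeg : LinearMap.range g = ⊤ := LinearMap.range_eq_top.mpr hgsurj
  have hrangeg1 : Module.finrank ℝ (LinearMap.range g) = 1 := by
    rw [hrangeg]; simp
  have hfr : Module.finrank ℝ (LinearMap.range f) = n - 1 := by omega
  have hkg : Module.finrank ℝ (LinearMap.ker g) = n - 1 := by omega
  -- range f ≤ ker g
  have hle : LinearMap.range f ≤ LinearMap.ker g := by
    rintro y ⟨x, rfl⟩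
    rw [LinearMap.mem_ker, hgapp]
    simp only [hf, Matrix.mulVecLin_apply, Matrix.mulVec, dotProduct]
    rw [Finset.sum_comm]
    simp [← Finset.sum_mul, hcol]
  have heq : LinearMap.range f = LinearMap.ker g :=
    Submodule.eq_of_le_of_finrank_eq hle (by rw [hfr, hkg])
  have hbmem : b ∈ LinearMap.range f := by
    rw [heq, LinearMap.mem_ker, hgapp]; exact hb
  obtain ⟨Z0, hZ0⟩ := hbmem
  simp only [hf, Matrix.mulVecLin_apply] at hZ0
  set c := (∑ i, Z0 i) / (∑ i, ρ i) with hc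
  refine ⟨Z0 - c • ρ, ⟨?_, ?_⟩, ?_⟩
  · rw [Matrix.mulVec_sub, Matrix.mulVec_smul, hAρ]
    simp only [smul_zero, sub_zero]
    exact hZ0
  · simp only [Pi.sub_apply, Pi.smul_apply, smul_eq_mul]
    rw [Finset.sum_sub_distrib, ← Finset.mul_sum, hc]
    field_simp
    ring
  · rintro W ⟨hW1, hW2⟩
    have hk : A.mulVec (W - (Z0 - c • ρ)) = 0 := by
      rw [Matrix.mulVec_sub, Matrix.mulVec_sub, Matrix.mulVec_smul, hAρ, hW1, hZ0]
      simp
    obtain ⟨d, hd⟩ := (hker _).mp hk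
    have hsum0 : (∑ i, Z0 i) - c * ∑ i, ρ i = 0 := by
      rw [hc]; field_simp; ring
    have : d * ∑ i, ρ i = 0 := by
      have := congrArg (fun v => ∑ i, v i) hd
      simp only [Pi.sub_apply, Finset.sum_sub_distrib, Pi.smul_apply, smul_eq_mul,
        ← Finset.mul_sum, hW2] at this
      linarith
    have hd0 : d = 0 := by
      rcases mul_eq_zero.mp this with h | h
      · exact h
      · exact absurd h hρsum
    have := hd
    rw [hd0, zero_smul, sub_eq_zero] at this
    exact this
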